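/- arXiv:1808.00986 — 3 statements merged into one kernel-verified Lean document; each statement's English description precedes it below -/
import Mathlib

section
/- For every i with k < i ≤ n, the probability that a uniformly random permutation σ of {1,…,n} satisfies both σ(i) = n and that the maximum of σ over positions 1,…,i−1 is attained at a position ≤ k equals k/(n(i−1)); that is, n · (i−1) · |U_i| = k · n!. -/
/-- `Rev n i`: the event (set of permutations of `Fin n`) that the maximum rank `n`
appears at (1-based) position `i`. -/
def Rev (n i : ℕ) : Finset (Equiv.Perm (Fin n)) :=
  Finset.univ.filter (fun σ => ∃ j : Fin n, (j : ℕ) + 1 = i ∧ (σ j : ℕ) + 1 = n)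

/-- `Tev n k i`: the event that the maximum of `σ` over (1-based) positions `1, …, i-1`
is attained at a position `≤ k`. -/
def Tev (n k i : ℕ) : Finset (Equiv.Perm (Fin n)) :=
  Finset.univ.filter (fun σ => ∃ j : Fin n, (j : ℕ) + 1 ≤ k ∧
    ∀ j' : Fin n, (j' : ℕ) + 1 < i → σ j' ≤ σ j)

/-- `Uev n k i = Rev n i ∩ Tev n k i`: the threshold algorithm successfully selects the
overall maximum located at position `i`. -/
def Uev (n k i : ℕ) : Finset (Equiv.Perm (Fin n)) := Rev n i ∩ Tev n k i

/-- The success event `U = ⋃_{i=k+1}^{n} U_i`. -/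
def Usucc (n k : ℕ) : Finset (Equiv.Perm (Fin n)) :=
  (Finset.Ioc k n).biUnion (fun i => Uev n k i)

theorem stmt3 (n k : ℕ) (hk : 1 ≤ k) (hkn : k < n) :
    ∀ i : ℕ, k < i → i ≤ n →
      n * (i - 1) * (Uev n k i).card = k * Nat.factorial n := by
  intro i hki hin
  classical
  have hn : 0 < n := by omega
  have hi2 : 2 ≤ i := by omega
  set i0 : Fin n := ⟨i - 1, by omega⟩ with hi0def
  set m : Fin n := ⟨n - 1, by omega⟩ with hmdef
  have hi0ne : ∀ p : Fin n, (p : ℕ) + 1 < i → i0 ≠ p := by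
    intro p hp h
    have : (i0 : ℕ) = p := congrArg Fin.val h
    simp [hi0def] at this
    omega
  -- characterization of Rev
  have hRev : Rev n i = Finset.univ.filter (fun σ => σ i0 = m) := by
    ext σ
    simp only [Rev, Finset.mem_filter, Finset.mem_univ, true_and]
    constructor
    · rintro ⟨j, hj1, hj2⟩
      have hj : j = i0 := Fin.ext (by simp [hi0def]; omega)
      subst hj
      exact Fin.ext (by simp [hmdef]; omega)
    · intro h
      refine ⟨i0, by simp [hi0def]; omega, by rw [h]; simp [hmdef]; omega⟩
  set V : Fin n → Finset (Equiv.Perm (Fin n)) := fun p =>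
    Finset.univ.filter (fun σ => σ i0 = m ∧ ∀ j' : Fin n, (j' : ℕ) + 1 < i → σ j' ≤ σ p)
    with hVdef
  have hswap : ∀ p q : Fin n, (p:ℕ)+1 < i → (q:ℕ)+1 < i → ∀ σ, σ ∈ V p →
      σ * Equiv.swap p q ∈ V q := by
    intro p q hp hq σ hσ
    simp only [hVdef, Finset.mem_filter, Finset.mem_univ, true_and] at hσ ⊢
    obtain ⟨h1, h2⟩ := hσ
    constructor
    · have hs : Equiv.swap p q i0 = i0 :=
        Equiv.swap_apply_of_ne_of_ne (hi0ne p hp) (hi0ne q hq)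
      simp [Equiv.Perm.mul_apply, hs, h1]
    · intro j' hj'
      have hq' : (σ * Equiv.swap p q) q = σ p := by
        simp [Equiv.Perm.mul_apply, Equiv.swap_apply_right]
      rw [hq']
      simp only [Equiv.Perm.mul_apply]
      rcases eq_or_ne j' p with rfl | hjp
      · rw [Equiv.swap_apply_left]; exact h2 q hq
      rcases eq_or_ne j' q with rfl | hjq
      · rw [Equiv.swap_apply_right]
      · rw [Equiv.swap_apply_of_ne_of_ne hjp hjq]; exact h2 j' hj'
  have hVcard : ∀ p q : Fin n, (p:ℕ)+1 < i → (q:ℕ)+1 < i → (V p).card = (V q).card := by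
    intro p q hp hq
    apply Finset.card_bij' (fun σ _ => σ * Equiv.swap p q) (fun σ _ => σ * Equiv.swap p q)
    · intro σ hσ; exact hswap p q hp hq σ hσ
    · intro σ hσ
      have := hswap q p hq hp σ hσ
      rwa [Equiv.swap_comm] at this
    · intro σ _; simp [mul_assoc]
    · intro σ _; simp [mul_assoc]
  have hdisj : ∀ p ∈ Finset.univ.filter (fun p : Fin n => (p:ℕ)+1 < i),
      ∀ q ∈ Finset.univ.filter (fun p : Fin n => (p:ℕ)+1 < i), p ≠ q →
      Disjoint (V p) (V q) := by
    intro p hp q hq hpq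
    simp only [Finset.mem_filter, Finset.mem_univ, true_and] at hp hq
    rw [Finset.disjoint_left]
    intro σ h1 h2
    simp only [hVdef, Finset.mem_filter] at h1 h2
    exact hpq (σ.injective (le_antisymm (h2.2.2 p hp) (h1.2.2 q hq)))
  -- Uev as biUnion
  have hUeq : Uev n k i = (Finset.univ.filter (fun p : Fin n => (p:ℕ)+1 ≤ k)).biUnion V := by
    ext σ
    simp only [Uev, Finset.mem_inter, hRev, Tev, hVdef, Finset.mem_filter, Finset.mem_univ,
      true_and, Finset.mem_biUnion]
    constructor
    · rintro ⟨h1, j, hjk, hmax⟩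
      exact ⟨j, hjk, h1, hmax⟩
    · rintro ⟨p, hpk, h1, hmax⟩
      exact ⟨h1, p, hpk, hmax⟩
  -- Rev as biUnion
  have hReq : Rev n i = (Finset.univ.filter (fun p : Fin n => (p:ℕ)+1 < i)).biUnion V := by
    rw [hRev]
    ext σ
    simp only [hVdef, Finset.mem_filter, Finset.mem_univ, true_and, Finset.mem_biUnion]
    constructor
    · intro h1
      obtain ⟨p, hp, hmax⟩ := Finset.exists_max_image
        (Finset.univ.filter (fun j : Fin n => (j:ℕ)+1 < i)) σ
        ⟨⟨0, hn⟩, by simp; omega⟩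
      simp only [Finset.mem_filter, Finset.mem_univ, true_and] at hp
      refine ⟨p, hp, h1, fun j' hj' => hmax j' (by simp [hj'])⟩
    · rintro ⟨p, _, h1, _⟩
      exact h1
  -- all permutations partitioned by value at i0
  have hRevcard : n * (Rev n i).card = Nat.factorial n := by
    have hpart : (Finset.univ : Finset (Equiv.Perm (Fin n))) =
        Finset.univ.biUnion (fun b : Fin n =>
          Finset.univ.filter (fun σ => σ i0 = b)) := by
      ext σ; simp
    have hdisjW : ∀ b ∈ (Finset.univ : Finset (Fin n)), ∀ c ∈ (Finset.univ : Finset (Fin n)),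
        b ≠ c → Disjoint (Finset.univ.filter (fun σ : Equiv.Perm (Fin n) => σ i0 = b))
          (Finset.univ.filter (fun σ : Equiv.Perm (Fin n) => σ i0 = c)) := by
      intro b _ c _ hbc
      rw [Finset.disjoint_left]
      intro σ h1 h2
      simp only [Finset.mem_filter, Finset.mem_univ, true_and] at h1 h2
      exact hbc (h1 ▸ h2 ▸ rfl)
    have hWcard : ∀ b : Fin n,
        (Finset.univ.filter (fun σ : Equiv.Perm (Fin n) => σ i0 = b)).card =
        (Finset.univ.filter (fun σ : Equiv.Perm (Fin n) => σ i0 = m)).card := by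
      intro b
      apply Finset.card_bij' (fun σ _ => Equiv.swap b m * σ) (fun σ _ => Equiv.swap b m * σ)
      · intro σ hσ
        simp only [Finset.mem_filter, Finset.mem_univ, true_and] at hσ ⊢
        simp [Equiv.Perm.mul_apply, hσ, Equiv.swap_apply_left]
      · intro σ hσ
        simp only [Finset.mem_filter, Finset.mem_univ, true_and] at hσ ⊢
        simp [Equiv.Perm.mul_apply, hσ, Equiv.swap_apply_right]
      · intro σ _; simp [← mul_assoc]
      · intro σ _; simp [← mul_assoc]
    have := congrArg Finset.card hpart
    rw [Finset.card_biUnion hdisjW] at this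
    rw [Finset.card_univ, Fintype.card_perm, Fintype.card_fin] at this
    rw [Finset.sum_congr rfl (fun b _ => hWcard b), Finset.sum_const, Finset.card_univ,
      Fintype.card_fin, smul_eq_mul] at this
    rw [hRev, ← this]
  set v : ℕ := (V ⟨0, hn⟩).card with hv
  have h0i : (0:ℕ) + 1 < i := by omega
  -- card of Uev
  have hUcard : (Uev n k i).card = k * v := by
    rw [hUeq, Finset.card_biUnion]
    · rw [Finset.sum_congr rfl (fun p hp => by
        simp only [Finset.mem_filter, Finset.mem_univ, true_and] at hp
        exact hVcard p ⟨0, hn⟩ (by omega) h0i)]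
      rw [Finset.sum_const, smul_eq_mul]
      congr 1
      have : Finset.univ.filter (fun p : Fin n => (p:ℕ)+1 ≤ k) = Finset.Iio (⟨k, hkn⟩ : Fin n) := by
        ext p; simp [Fin.lt_def]
      rw [this, Fin.card_Iio]
    · intro p hp q hq hpq
      simp only [Finset.mem_coe, Finset.mem_filter, Finset.mem_univ, true_and] at hp hq
      exact hdisj p (by simp; omega) q (by simp; omega) hpq
  have hRcard : (Rev n i).card = (i - 1) * v := by
    rw [hReq, Finset.card_biUnion hdisj]
    rw [Finset.sum_congr rfl (fun p hp => by
      simp only [Finset.mem_filter, Finset.mem_univ, true_and] at hp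
      exact hVcard p ⟨0, hn⟩ hp h0i)]
    rw [Finset.sum_const, smul_eq_mul]
    congr 1
    have : Finset.univ.filter (fun p : Fin n => (p:ℕ)+1 < i) = Finset.Iio i0 := by
      ext p; simp [Fin.lt_def, hi0def]; omega
    rw [this, Fin.card_Iio]
  rw [hUcard]
  rw [hRcard] at hRevcard
  calc n * (i - 1) * (k * v) = k * (n * ((i - 1) * v)) := by ring
    _ = k * Nat.factorial n := by rw [hRevcard]
end

section
/- The success probability of the threshold algorithm satisfies the exact formula Pr(U) = (k/n) · Σ_{i=k}^{n−1} (1/i); that is, |U| / n! = (k/n) · Σ_{i=k}^{n−1} (1/i). -/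
open Finset Equiv


/-- Auxiliary event: top value at position `p`, and `σ` over positions `< p` dominated by `σ j`. -/
def Aev (n : ℕ) (p j : Fin n) : Finset (Equiv.Perm (Fin n)) :=
  Finset.univ.filter (fun σ => ((σ p : ℕ) + 1 = n) ∧
    ∀ j' : Fin n, (j' : ℕ) < (p : ℕ) → σ j' ≤ σ j)

/-- Auxiliary event: `σ p = t`. -/
def Bev (n : ℕ) (p t : Fin n) : Finset (Equiv.Perm (Fin n)) :=
  Finset.univ.filter (fun σ => σ p = t)

lemma card_Bev_eq (n : ℕ) (p t t' : Fin n) : (Bev n p t).card = (Bev n p t').card := by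
  apply Finset.card_bij' (fun σ _ => Equiv.swap t t' * σ) (fun σ _ => Equiv.swap t t' * σ)
  · intro σ hσ
    simp only [Bev, mem_filter, mem_univ, true_and] at hσ ⊢
    simp [hσ, Equiv.swap_apply_left]
  · intro σ hσ
    simp only [Bev, mem_filter, mem_univ, true_and] at hσ ⊢
    simp [hσ, Equiv.swap_apply_right]
  · intro σ _; simp [← mul_assoc]
  · intro σ _; simp [← mul_assoc]

lemma card_Bev (n : ℕ) (p t : Fin n) : (Bev n p t).card = (n-1).factorial := by
  have hn : 0 < n := p.pos
  have h1 : (Finset.univ : Finset (Equiv.Perm (Fin n))).card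
      = ∑ t' : Fin n, (Bev n p t').card := by
    simp only [Bev]
    exact Finset.card_eq_sum_card_fiberwise (fun σ _ => mem_univ (σ p))
  have h2 : ∑ t' : Fin n, (Bev n p t').card = n * (Bev n p t).card := by
    rw [Finset.sum_congr rfl (fun t' _ => card_Bev_eq n p t' t)]
    simp [mul_comm]
  have h3 : n.factorial = n * (Bev n p t).card := by
    rw [← h2, ← h1]; simp [Fintype.card_perm]
  have h4 : n * (n-1).factorial = n * (Bev n p t).card := by
    rw [← h3, Nat.mul_factorial_pred hn.ne']
  exact (Nat.eq_of_mul_eq_mul_left hn h4).symm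

lemma mem_Aev_swap (n : ℕ) (p j j₂ : Fin n) (hj : (j:ℕ) < p) (hj₂ : (j₂:ℕ) < p)
    (σ : Equiv.Perm (Fin n)) (hσ : σ ∈ Aev n p j) :
    σ * Equiv.swap j j₂ ∈ Aev n p j₂ := by
  simp only [Aev, mem_filter, mem_univ, true_and, Equiv.Perm.mul_apply] at hσ ⊢
  obtain ⟨h1, h2⟩ := hσ
  have hpj : p ≠ j := fun h => absurd (h ▸ hj) (lt_irrefl _)
  have hpj₂ : p ≠ j₂ := fun h => absurd (h ▸ hj₂) (lt_irrefl _)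
  constructor
  · rw [Equiv.swap_apply_of_ne_of_ne hpj hpj₂]; exact h1
  · intro j' hj'
    rw [Equiv.swap_apply_right]
    rcases eq_or_ne j' j with rfl | hne1
    · rw [Equiv.swap_apply_left]; exact h2 j₂ hj₂
    rcases eq_or_ne j' j₂ with rfl | hne2
    · rw [Equiv.swap_apply_right]
    rw [Equiv.swap_apply_of_ne_of_ne hne1 hne2]; exact h2 j' hj'

lemma card_Aev_eq (n : ℕ) (p j j₂ : Fin n) (hj : (j:ℕ) < p) (hj₂ : (j₂:ℕ) < p) :
    (Aev n p j).card = (Aev n p j₂).card := by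
  apply Finset.card_bij' (fun σ _ => σ * Equiv.swap j j₂) (fun σ _ => σ * Equiv.swap j j₂)
  · exact fun σ hσ => mem_Aev_swap n p j j₂ hj hj₂ σ hσ
  · exact fun σ hσ => Equiv.swap_comm j j₂ ▸ mem_Aev_swap n p j₂ j hj₂ hj σ hσ
  · intro σ _; rw [mul_assoc]; simp
  · intro σ _; rw [mul_assoc]; simp

lemma card_lt_filter (n m : ℕ) (h : m ≤ n) :
    (Finset.univ.filter (fun j : Fin n => (j:ℕ) < m)).card = m := by
  rw [Finset.card_filter]
  rw [Fin.sum_univ_eq_sum_range (fun i => if i < m then 1 else 0)]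
  rw [← Finset.card_filter]
  have : Finset.filter (fun i => i < m) (Finset.range n) = Finset.range m := by
    ext i; simp; omega
  rw [this, Finset.card_range]

lemma Aev_disjoint (n : ℕ) (p j j₂ : Fin n) (hj : (j:ℕ) < p) (hj₂ : (j₂:ℕ) < p)
    (hne : j ≠ j₂) : Disjoint (Aev n p j) (Aev n p j₂) := by
  rw [Finset.disjoint_left]
  intro σ h1 h2
  simp only [Aev, mem_filter, mem_univ, true_and] at h1 h2
  have e1 := h1.2 j₂ hj₂
  have e2 := h2.2 j hj
  exact hne (σ.injective (le_antisymm e2 e1))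

lemma Bev_top_eq (n : ℕ) (p : Fin n) (hp : 0 < (p:ℕ)) :
    Finset.univ.filter (fun σ : Equiv.Perm (Fin n) => (σ p : ℕ) + 1 = n)
      = (Finset.univ.filter (fun j : Fin n => (j:ℕ) < p)).biUnion (Aev n p) := by
  ext σ
  simp only [mem_filter, mem_univ, true_and, mem_biUnion, Aev]
  constructor
  · intro h1
    have hne : (Finset.univ.filter (fun j : Fin n => (j:ℕ) < p)).Nonempty := by
      refine ⟨⟨0, p.pos⟩, ?_⟩
      simp only [mem_filter, mem_univ, true_and]; exact hp
    obtain ⟨j, hj, hmax⟩ := Finset.exists_max_image _ σ hne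
    simp only [mem_filter, mem_univ, true_and] at hj
    refine ⟨j, by simp [hj], h1, ?_⟩
    intro j' hj'
    refine hmax j' ?_
    simp only [mem_filter, mem_univ, true_and]; exact hj'
  · rintro ⟨j, _, h1, _⟩
    exact h1

lemma mul_card_Aev (n : ℕ) (p j : Fin n) (hj : (j:ℕ) < p) :
    (p:ℕ) * (Aev n p j).card = (n-1).factorial := by
  have hp : 0 < (p:ℕ) := lt_of_le_of_lt (Nat.zero_le _) hj
  have htop : n - 1 < n := Nat.sub_lt p.pos one_pos
  have hB : Finset.univ.filter (fun σ : Equiv.Perm (Fin n) => (σ p : ℕ) + 1 = n)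
      = Bev n p ⟨n-1, htop⟩ := by
    ext σ
    simp only [Bev, mem_filter, mem_univ, true_and, Fin.ext_iff]
    omega
  have hcard := card_Bev n p ⟨n-1, htop⟩
  rw [← hB, Bev_top_eq n p hp] at hcard
  rw [Finset.card_biUnion (fun x hx y hy hxy => Aev_disjoint n p x y
      (by simpa using (mem_filter.mp hx).2) (by simpa using (mem_filter.mp hy).2) hxy)] at hcard
  rw [Finset.sum_congr rfl (fun x hx => card_Aev_eq n p x j
      (by simpa using (mem_filter.mp hx).2) hj)] at hcard
  rw [Finset.sum_const, smul_eq_mul, card_lt_filter n p (le_of_lt p.isLt)] at hcard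
  exact hcard




lemma Uev_eq (n k i : ℕ) (hk : 1 ≤ k) (hki : k < i) (hin : i ≤ n) :
    Uev n k i = (Finset.univ.filter (fun j : Fin n => (j:ℕ) < k)).biUnion
      (fun j => Aev n ⟨i-1, by omega⟩ j) := by
  ext σ
  simp only [Uev, Rev, Tev, mem_inter, mem_filter, mem_univ, true_and, mem_biUnion, Aev]
  constructor
  · rintro ⟨⟨j, hj1, hj2⟩, jt, hjt1, hjt2⟩
    have hjval : (j : ℕ) = i - 1 := by omega
    refine ⟨jt, by omega, ?_, ?_⟩
    · have : j = ⟨i-1, by omega⟩ := Fin.ext (by simpa using hjval)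
      rw [← this]; exact hj2
    · intro j' hj'
      exact hjt2 j' (by omega)
  · rintro ⟨j, hjmem, h1, h2⟩
    refine ⟨⟨⟨i-1, by omega⟩, ?_, h1⟩, j, by omega, fun j' hj' => h2 j' ?_⟩
    · show (i - 1) + 1 = i; omega
    · show (j' : ℕ) < i - 1
      omega

lemma mul_card_Uev (n k i : ℕ) (hk : 1 ≤ k) (hki : k < i) (hin : i ≤ n) :
    (i-1) * (Uev n k i).card = k * (n-1).factorial := by
  have hpn : i - 1 < n := by omega
  set p : Fin n := ⟨i-1, hpn⟩ with hp
  have h0n : 0 < n := by omega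
  set j0 : Fin n := ⟨0, h0n⟩ with hj0def
  have hj0p : (j0:ℕ) < (p:ℕ) := by simp [hp, hj0def]; omega
  have hmem : ∀ x : Fin n, x ∈ Finset.univ.filter (fun j : Fin n => (j:ℕ) < k) →
      (x:ℕ) < (p:ℕ) := by
    intro x hx
    simp only [mem_filter, mem_univ, true_and] at hx
    simp only [hp]; omega
  rw [Uev_eq n k i hk hki hin]
  rw [Finset.card_biUnion (fun x hx y hy hxy =>
    Aev_disjoint n p x y (hmem x hx) (hmem y hy) hxy)]
  rw [Finset.sum_congr rfl (fun x hx => card_Aev_eq n p x j0 (hmem x hx) hj0p)]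
  rw [Finset.sum_const, smul_eq_mul, card_lt_filter n k (by omega)]
  have hA := mul_card_Aev n p j0 hj0p
  calc (i-1) * (k * (Aev n p j0).card) = k * ((p:ℕ) * (Aev n p j0).card) := by
        simp only [hp]; ring
    _ = k * (n-1).factorial := by rw [hA]

lemma card_Usucc (n k : ℕ) :
    (Usucc n k).card = ∑ i ∈ Finset.Ioc k n, (Uev n k i).card := by
  rw [Usucc]
  apply Finset.card_biUnion
  intro x hx y hy hxy
  rw [Function.onFun, Finset.disjoint_left]
  intro σ hσx hσy
  simp only [Uev, Rev, mem_inter, mem_filter, mem_univ, true_and] at hσx hσy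
  obtain ⟨⟨j, hj1, hj2⟩, _⟩ := hσx
  obtain ⟨⟨j', hj1', hj2'⟩, _⟩ := hσy
  have hσeq : σ j = σ j' := Fin.ext (by omega)
  have : j = j' := σ.injective hσeq
  exact hxy (by omega)

theorem stmt4 (n k : ℕ) (hk : 1 ≤ k) (hkn : k < n) :
    ((Usucc n k).card : ℝ) / (Nat.factorial n : ℝ) =
      ((k : ℝ) / (n : ℝ)) * ∑ i ∈ Finset.Icc k (n - 1), (1 : ℝ) / (i : ℝ) := by
  have hn0 : 0 < n := by omega
  have hfac : (n.factorial : ℝ) = (n : ℝ) * ((n-1).factorial : ℝ) := by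
    rw [← Nat.mul_factorial_pred hn0.ne']; push_cast; ring
  have hfacpos : (0:ℝ) < (n.factorial : ℝ) := by positivity
  rw [card_Usucc]
  push_cast
  rw [Finset.sum_div]
  have hterm : ∀ i ∈ Finset.Ioc k n,
      ((Uev n k i).card : ℝ) / (n.factorial : ℝ)
        = ((k:ℝ)/(n:ℝ)) * (1 / ((i-1 : ℕ) : ℝ)) := by
    intro i hi
    simp only [Finset.mem_Ioc] at hi
    have hnat := mul_card_Uev n k i hk hi.1 hi.2
    have hcast : ((i-1 : ℕ) : ℝ) * ((Uev n k i).card : ℝ)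
        = (k : ℝ) * ((n-1).factorial : ℝ) := by exact_mod_cast congrArg Nat.cast hnat
    have hi1 : (0:ℝ) < ((i-1:ℕ):ℝ) := by
      have : 0 < i - 1 := by omega
      exact_mod_cast this
    have hfp : (0:ℝ) < ((n-1).factorial : ℝ) := by positivity
    field_simp [hfac]
    nlinarith [hcast]
  rw [Finset.sum_congr rfl hterm]
  rw [← Finset.mul_sum]
  congr 1
  apply Finset.sum_nbij' (fun i => i - 1) (fun j => j + 1)
  · intro i hi; simp only [Finset.mem_Ioc, Finset.mem_Icc] at hi ⊢; omega
  · intro j hj; simp only [Finset.mem_Ioc, Finset.mem_Icc] at hj ⊢; omega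
  · intro i hi; simp only [Finset.mem_Ioc] at hi; omega
  · intro j hj; simp only [Finset.mem_Icc] at hj; omega
  · intro i hi; rfl
end

section
/- The success probability of the threshold algorithm satisfies (k/n)(ln n − ln k) ≤ Pr(U) ≤ (k/n)(ln(n−1) − ln(k−1)), where Pr(U) = |U|/n!, for all natural numbers n and k with 2 ≤ k < n. -/
open Finset Equiv

lemma card_sigma_eq (n : ℕ) (a b : Fin n) :
    (Finset.univ.filter (fun σ : Equiv.Perm (Fin n) => σ a = b)).card * n = n.factorial := by
  classical
  have e : Equiv.Perm (Fin n) ≃ {σ : Equiv.Perm (Fin n) // σ a = b} × Fin n :=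
  { toFun := fun τ => (⟨Equiv.swap b (τ a) * τ, by simp⟩, τ a)
    invFun := fun p => Equiv.swap b p.2 * p.1.1
    left_inv := fun τ => by
      simp [← mul_assoc]
    right_inv := fun p => by
      obtain ⟨⟨σ, hσ⟩, c⟩ := p
      have h1 : (Equiv.swap b c * σ) a = Equiv.swap b c b := by simp [hσ]
      ext
      · simp [h1, ← mul_assoc]
      · simp [h1, hσ] }
  have hc := Fintype.card_congr e
  rw [Fintype.card_prod, Fintype.card_fin, Fintype.card_subtype, Fintype.card_perm,
    Fintype.card_fin] at hc
  omega

/-- `Aset n i₀ j`: permutations whose maximum is at position `i₀` and whose prefix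
(positions `< i₀`) maximum is at position `j`. -/
def Aset (n : ℕ) (i₀ j : Fin n) : Finset (Equiv.Perm (Fin n)) :=
  Finset.univ.filter (fun σ => (σ i₀ : ℕ) + 1 = n ∧
    ∀ j' : Fin n, (j' : ℕ) < (i₀ : ℕ) → σ j' ≤ σ j)

lemma mem_Aset_map (n : ℕ) (i₀ j j' : Fin n) (hj : (j:ℕ) < i₀) (hj' : (j':ℕ) < i₀)
    (σ : Equiv.Perm (Fin n)) (hσ : σ ∈ Aset n i₀ j) :
    σ * Equiv.swap j j' ∈ Aset n i₀ j' := by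
  simp only [Aset, mem_filter, mem_univ, true_and] at hσ ⊢
  obtain ⟨h1, h2⟩ := hσ
  have hi₀j : i₀ ≠ j := by intro h; subst h; omega
  have hi₀j' : i₀ ≠ j' := by intro h; subst h; omega
  constructor
  · simp [Equiv.swap_apply_of_ne_of_ne hi₀j hi₀j', h1]
  · intro j'' hj''
    have hswap : ((Equiv.swap j j') j'' : ℕ) < i₀ := by
      rcases eq_or_ne j'' j with rfl | h
      · simpa [Equiv.swap_apply_left]
      rcases eq_or_ne j'' j' with rfl | h'
      · simpa [Equiv.swap_apply_right]
      · simpa [Equiv.swap_apply_of_ne_of_ne h h']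
    simp only [Equiv.Perm.mul_apply, Equiv.swap_apply_right]
    exact h2 _ hswap

lemma card_Aset_eq (n : ℕ) (i₀ j j' : Fin n) (hj : (j:ℕ) < i₀) (hj' : (j':ℕ) < i₀) :
    (Aset n i₀ j).card = (Aset n i₀ j').card := by
  apply Finset.card_bij' (fun σ _ => σ * Equiv.swap j j') (fun σ _ => σ * Equiv.swap j j')
  · intro σ hσ; exact mem_Aset_map n i₀ j j' hj hj' σ hσ
  · intro σ hσ
    have := mem_Aset_map n i₀ j' j hj' hj σ hσ
    rwa [Equiv.swap_comm] at this
  · intro σ _; simp [mul_assoc]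
  · intro σ _; simp [mul_assoc]

lemma Aset_disjoint (n : ℕ) (i₀ : Fin n) (j j' : Fin n) (hj : (j:ℕ) < i₀) (hj' : (j':ℕ) < i₀)
    (hne : j ≠ j') : Disjoint (Aset n i₀ j) (Aset n i₀ j') := by
  rw [Finset.disjoint_left]
  intro σ h1 h2
  simp only [Aset, mem_filter, mem_univ, true_and] at h1 h2
  have e1 := h1.2 j' hj'
  have e2 := h2.2 j hj
  exact hne (σ.injective (le_antisymm e2 e1))

lemma biUnion_Aset (n : ℕ) (i₀ : Fin n) (h1 : 1 ≤ (i₀:ℕ)) :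
    (Finset.univ.filter (fun j : Fin n => (j:ℕ) < (i₀:ℕ))).biUnion (Aset n i₀)
      = Finset.univ.filter (fun σ : Equiv.Perm (Fin n) => (σ i₀ : ℕ) + 1 = n) := by
  ext σ
  simp only [mem_biUnion, Aset, mem_filter, mem_univ, true_and]
  constructor
  · rintro ⟨j, _, h, _⟩; exact h
  · intro h
    have hn : 0 < n := i₀.pos
    obtain ⟨j, hj, hmax⟩ := Finset.exists_max_image
      (Finset.univ.filter (fun j : Fin n => (j:ℕ) < (i₀:ℕ))) σ
      ⟨⟨0, hn⟩, Finset.mem_filter.mpr ⟨Finset.mem_univ _, by simpa using (by omega : 0 < (i₀:ℕ))⟩⟩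
    simp only [mem_filter, mem_univ, true_and] at hj
    exact ⟨j, hj, h, fun j' hj' => hmax j' (Finset.mem_filter.mpr ⟨Finset.mem_univ _, hj'⟩)⟩

lemma card_Aset_mul (n : ℕ) (i₀ j : Fin n) (hj : (j:ℕ) < i₀) :
    (Aset n i₀ j).card * ((i₀:ℕ) * n) = n.factorial := by
  classical
  have hn : 0 < n := i₀.pos
  have h1 : 1 ≤ (i₀:ℕ) := by omega
  have htop := card_sigma_eq n i₀ ⟨n - 1, by omega⟩
  have hfe : (Finset.univ.filter (fun σ : Equiv.Perm (Fin n) => (σ i₀ : ℕ) + 1 = n))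
      = (Finset.univ.filter (fun σ : Equiv.Perm (Fin n) => σ i₀ = ⟨n - 1, by omega⟩)) := by
    ext σ; simp [Fin.ext_iff]; omega
  have hidx : (Finset.univ.filter (fun j : Fin n => (j:ℕ) < (i₀:ℕ))) = Finset.Iio i₀ := by
    ext j'; simp only [Finset.mem_filter, Finset.mem_univ, true_and, Finset.mem_Iio,
      Fin.lt_iff_val_lt_val]
  have hcard : ((Finset.univ.filter (fun j : Fin n => (j:ℕ) < (i₀:ℕ)))).card = (i₀:ℕ) := by
    rw [hidx, Fin.card_Iio]
  have hdisj : ∀ x ∈ (Finset.univ.filter (fun j : Fin n => (j:ℕ) < (i₀:ℕ))),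
      ∀ y ∈ (Finset.univ.filter (fun j : Fin n => (j:ℕ) < (i₀:ℕ))), x ≠ y →
      Disjoint (Aset n i₀ x) (Aset n i₀ y) := by
    intro x hx y hy hxy
    simp only [mem_filter, mem_univ, true_and] at hx hy
    exact Aset_disjoint n i₀ x y hx hy hxy
  have hbu := Finset.card_biUnion hdisj
  rw [biUnion_Aset n i₀ h1, hfe] at hbu
  have hsum : ∑ j' ∈ (Finset.univ.filter (fun j : Fin n => (j:ℕ) < (i₀:ℕ))),
      (Aset n i₀ j').card = (i₀:ℕ) * (Aset n i₀ j).card := by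
    rw [Finset.sum_congr rfl (fun j' hj' => by
      simp only [mem_filter, mem_univ, true_and] at hj'
      exact card_Aset_eq n i₀ j' j hj' hj), Finset.sum_const, hcard, smul_eq_mul]
  rw [hsum] at hbu
  calc (Aset n i₀ j).card * ((i₀:ℕ) * n) = ((i₀:ℕ) * (Aset n i₀ j).card) * n := by ring
  _ = n.factorial := by rw [← hbu]; exact htop

lemma card_filter_val_lt (n m : ℕ) (hm : m ≤ n) :
    ((Finset.univ.filter (fun j : Fin n => (j:ℕ) < m))).card = m := by
  have : (Finset.univ.filter (fun j : Fin n => (j:ℕ) < m))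
      = (Finset.range m).attachFin (fun x hx => lt_of_lt_of_le (Finset.mem_range.mp hx) hm) := by
    ext j
    simp [Finset.mem_attachFin]
  rw [this, Finset.card_attachFin, Finset.card_range]

lemma card_Uev (n k i : ℕ) (hk : 2 ≤ k) (hki : k < i) (hin : i ≤ n) :
    (Uev n k i).card * ((i - 1) * n) = k * n.factorial := by
  classical
  have hn3 : 3 ≤ n := by omega
  set i₀ : Fin n := ⟨i - 1, by omega⟩ with hi₀
  have hi₀v : (i₀ : ℕ) = i - 1 := rfl
  have hUe : Uev n k i = (Finset.univ.filter (fun j : Fin n => (j:ℕ) < k)).biUnion (Aset n i₀) := by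
    ext σ
    simp only [Uev, Rev, Tev, Aset, Finset.mem_inter, Finset.mem_filter, Finset.mem_univ,
      true_and, Finset.mem_biUnion]
    constructor
    · rintro ⟨⟨j₁, hj₁, hσ₁⟩, ⟨j, hjk, hmax⟩⟩
      have hj₁i : j₁ = i₀ := by
        apply Fin.ext; rw [hi₀v]; omega
      refine ⟨j, by omega, by rw [← hj₁i]; exact hσ₁, fun j' hj' => hmax j' (by omega)⟩
    · rintro ⟨j, hjk, htop, hmax⟩
      exact ⟨⟨i₀, by rw [hi₀v]; omega, htop⟩, ⟨j, by omega, fun j' hj' => hmax j' (by omega)⟩⟩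
  have hdisj : ∀ x ∈ (Finset.univ.filter (fun j : Fin n => (j:ℕ) < k)),
      ∀ y ∈ (Finset.univ.filter (fun j : Fin n => (j:ℕ) < k)), x ≠ y →
      Disjoint (Aset n i₀ x) (Aset n i₀ y) := by
    intro x hx y hy hxy
    simp only [Finset.mem_filter, Finset.mem_univ, true_and] at hx hy
    exact Aset_disjoint n i₀ x y (by rw [hi₀v]; omega) (by rw [hi₀v]; omega) hxy
  rw [hUe, Finset.card_biUnion hdisj, Finset.sum_mul]
  rw [Finset.sum_congr rfl (fun j hj => by
    simp only [Finset.mem_filter, Finset.mem_univ, true_and] at hj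
    show (Aset n i₀ j).card * ((i - 1) * n) = n.factorial
    rw [← hi₀v]
    exact card_Aset_mul n i₀ j (by rw [hi₀v]; omega))]
  rw [Finset.sum_const, smul_eq_mul, card_filter_val_lt n k (by omega)]

lemma Uev_disj (n k : ℕ) : ∀ i ∈ Finset.Ioc k n, ∀ i' ∈ Finset.Ioc k n, i ≠ i' →
    Disjoint (Uev n k i) (Uev n k i') := by
  intro i _ i' _ hne
  rw [Finset.disjoint_left]
  intro σ h1 h2
  simp only [Uev, Rev, Finset.mem_inter, Finset.mem_filter, Finset.mem_univ, true_and] at h1 h2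
  obtain ⟨⟨j, hj, hσj⟩, -⟩ := h1
  obtain ⟨⟨j', hj', hσj'⟩, -⟩ := h2
  have hσ : σ j = σ j' := Fin.ext (by omega)
  have : j = j' := σ.injective hσ
  omega

lemma log_lower (k : ℕ) (hk : 1 ≤ k) : ∀ n, k ≤ n →
    Real.log n - Real.log k ≤ ∑ m ∈ Finset.Ico k n, (1 : ℝ) / m := by
  refine Nat.le_induction ?_ ?_
  · simp
  · intro n hn ih
    rw [Finset.sum_Ico_succ_top hn]
    have hn0 : (0:ℝ) < n := by
      have : 1 ≤ n := le_trans hk hn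
      exact_mod_cast Nat.pos_of_ne_zero (by omega)
    have hkey : Real.log (n + 1) - Real.log n ≤ 1 / n := by
      have h1 := Real.log_le_sub_one_of_pos (show (0:ℝ) < ((n:ℝ) + 1) / n by positivity)
      rw [Real.log_div (by positivity) (by positivity)] at h1
      have : ((n:ℝ) + 1) / n - 1 = 1 / n := by field_simp; ring
      linarith [this ▸ h1]
    push_cast
    linarith

lemma log_upper (k : ℕ) (hk : 2 ≤ k) : ∀ n, k ≤ n →
    ∑ m ∈ Finset.Ico k n, (1 : ℝ) / m ≤ Real.log ((n:ℝ) - 1) - Real.log ((k:ℝ) - 1) := by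
  refine Nat.le_induction ?_ ?_
  · simp
  · intro n hn ih
    rw [Finset.sum_Ico_succ_top hn]
    have hn2 : (2:ℝ) ≤ n := by exact_mod_cast le_trans hk hn
    have hkey : (1:ℝ) / n ≤ Real.log n - Real.log ((n:ℝ) - 1) := by
      have h1 := Real.log_le_sub_one_of_pos (show (0:ℝ) < ((n:ℝ) - 1) / n by
        apply div_pos <;> linarith)
      rw [Real.log_div (by linarith) (by linarith)] at h1
      have : ((n:ℝ) - 1) / n - 1 = -(1 / n) := by field_simp; ring
      linarith [this ▸ h1]
    push_cast
    have he : (n:ℝ) + 1 - 1 = (n:ℝ) := by ring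
    rw [he] at *
    linarith

theorem stmt6 (n k : ℕ) (hk : 2 ≤ k) (hkn : k < n) :
    ((k : ℝ) / (n : ℝ)) * (Real.log n - Real.log k) ≤
        ((Usucc n k).card : ℝ) / (Nat.factorial n : ℝ) ∧
      ((Usucc n k).card : ℝ) / (Nat.factorial n : ℝ) ≤
        ((k : ℝ) / (n : ℝ)) * (Real.log ((n : ℝ) - 1) - Real.log ((k : ℝ) - 1)) := by
  classical
  have hn0 : (0:ℝ) < n := by
    have : 0 < n := by omega
    exact_mod_cast this
  have hfac0 : (0:ℝ) < n.factorial := by exact_mod_cast n.factorial_pos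
  have hcard : ((Usucc n k).card : ℝ) = ∑ i ∈ Finset.Ioc k n, ((Uev n k i).card : ℝ) := by
    rw [Usucc, Finset.card_biUnion (Uev_disj n k)]
    push_cast
    rfl
  have hkey : ∀ i ∈ Finset.Ioc k n,
      ((Uev n k i).card : ℝ) / n.factorial = (k:ℝ)/n * (1/(((i-1:ℕ)):ℝ)) := by
    intro i hi
    rw [Finset.mem_Ioc] at hi
    have h := card_Uev n k i hk hi.1 hi.2
    have hi1 : (0:ℝ) < ((i-1:ℕ):ℝ) := by
      have : 0 < i - 1 := by omega
      exact_mod_cast this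
    have hcast : ((Uev n k i).card : ℝ) * (((i-1:ℕ):ℝ) * n) = k * n.factorial := by
      exact_mod_cast congrArg (fun x : ℕ => (x:ℝ)) h
    field_simp
    linarith [hcast]
  have hprob : ((Usucc n k).card : ℝ) / n.factorial
      = (k:ℝ)/n * ∑ m ∈ Finset.Ico k n, (1:ℝ)/m := by
    rw [hcard, Finset.sum_div, Finset.sum_congr rfl hkey, ← Finset.mul_sum]
    congr 1
    refine Finset.sum_nbij' (fun i => i - 1) (fun m => m + 1) ?_ ?_ ?_ ?_ ?_
    · intro a ha; rw [Finset.mem_Ioc] at ha; rw [Finset.mem_Ico]; omega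
    · intro a ha; rw [Finset.mem_Ico] at ha; rw [Finset.mem_Ioc]; omega
    · intro a ha; rw [Finset.mem_Ioc] at ha; omega
    · intro a ha; rw [Finset.mem_Ico] at ha; omega
    · intro a ha; rfl
  rw [hprob]
  have hdiv : (0:ℝ) ≤ (k:ℝ)/n := by positivity
  constructor
  · exact mul_le_mul_of_nonneg_left (log_lower k (by omega) n (by omega)) hdiv
  · exact mul_le_mul_of_nonneg_left (log_upper k hk n (by omega)) hdiv
end
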